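/- Let (δ, ω) be a solution of the fault-on swing equations on ℝ with δ(0) = δˢ and ω(0) = 0, and set u_i := (1/M_i)[ (P_{m,i} − P^{on}_{a,i}) − ∑_{k≠i} P̄^{on}_{ik} sin(δˢ_i − δˢ_k) ]. Then the post-fault energy along the trajectory admits the second-order expansion H(δ(t), ω(t)) = H(δˢ, 0) + β̃ t² + o(t²) as t → 0, where β̃ = ½ ∑_{i=1}^n (P_{a,i} − P^{on}_{a,i}) u_i + ½ ∑_{i<k} (P̄_{ik} − P̄^{on}_{ik}) sin(δˢ_i − δˢ_k)(u_i − u_k). -/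

import Mathlib

open Real Finset Asymptotics


/-- Second-order Taylor expansion lemma. -/

lemma taylor2 (f : ℝ → ℝ) (b : ℝ) (hf : Differentiable ℝ f)
    (hf0 : deriv f 0 = 0) (hf' : HasDerivAt (deriv f) b 0) :
    (fun t => f t - f 0 - (b / 2) * t ^ 2) =o[nhds (0:ℝ)] fun t => t ^ 2 := by
  set φ : ℝ → ℝ := fun t => f t - f 0 - (b / 2) * t ^ 2 with hφdef
  have hφd : ∀ t : ℝ, HasDerivAt φ (deriv f t - b * t) t := by
    intro t
    have h1 : HasDerivAt (fun t : ℝ => (b / 2) * t ^ 2) (b * t) t := by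
      have := (hasDerivAt_pow 2 t).const_mul (b / 2)
      exact this.congr_deriv (by ring)
    simpa using ((hf t).hasDerivAt.sub_const (f 0)).fun_sub h1
  have hlil : (fun t => deriv f t - b * t) =o[nhds (0:ℝ)] fun t => t := by
    have := (hasDerivAt_iff_isLittleO.mp hf')
    simpa [hf0, mul_comm] using this
  rw [Asymptotics.isLittleO_iff] at hlil ⊢
  intro c hc
  rcases Metric.eventually_nhds_iff.mp (hlil hc) with ⟨r, hr, hball⟩
  have : ∀ᶠ t : ℝ in nhds 0, dist t 0 < r := Metric.eventually_nhds_iff.mpr ⟨r, hr, fun _ h => h⟩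
  filter_upwards [this] with t ht
  have hφ0 : φ 0 = 0 := by simp [hφdef]
  have key : ‖φ t - φ 0‖ ≤ (c * |t|) * ‖t - 0‖ := by
    apply Convex.norm_image_sub_le_of_norm_deriv_le
      (f := φ) (s := Metric.closedBall (0:ℝ) |t|)
    · intro x _
      exact (hφd x).differentiableAt
    · intro x hx
      have hx' : |x| ≤ |t| := by simpa [Real.dist_eq] using hx
      have hxr : dist x 0 < r := by
        simp only [Real.dist_eq, sub_zero] at ht ⊢
        exact lt_of_le_of_lt hx' ht
      have := hball hxr
      rw [(hφd x).deriv]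
      calc ‖deriv f x - b * x‖ ≤ c * ‖x‖ := this
        _ ≤ c * |t| := by
            rw [Real.norm_eq_abs]
            exact mul_le_mul_of_nonneg_left hx' hc.le
    · exact convex_closedBall _ _
    · simp
    · simp [Real.dist_eq]
  rw [hφ0, sub_zero] at key
  calc ‖φ t‖ ≤ (c * |t|) * ‖t - 0‖ := key
    _ = c * ‖t ^ 2‖ := by
        rw [sub_zero, Real.norm_eq_abs, Real.norm_eq_abs, abs_pow]
        ring

/-- Symmetrization of an off-diagonal double sum. -/

lemma sum_erase_eq_sum_Ioi {n : ℕ} (a : Fin n → Fin n → ℝ) :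
    ∑ i, ∑ k ∈ Finset.univ.erase i, a i k
      = ∑ i, ∑ k ∈ Finset.Ioi i, (a i k + a k i) := by
  have herase : ∀ i : Fin n, Finset.univ.erase i = Finset.Iio i ∪ Finset.Ioi i := by
    intro i; ext k
    simp only [Finset.mem_erase, Finset.mem_univ, and_true, Finset.mem_union,
      Finset.mem_Iio, Finset.mem_Ioi]
    exact ne_iff_lt_or_gt
  have hdisj : ∀ i : Fin n, Disjoint (Finset.Iio i) (Finset.Ioi i) := by
    intro i
    simp [Finset.disjoint_left]
    intro k hk; exact le_of_lt hk
  have hswap : ∑ i, ∑ k ∈ Finset.Iio i, a i k = ∑ i, ∑ k ∈ Finset.Ioi i, a k i := by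
    rw [Finset.sum_sigma', Finset.sum_sigma']
    refine Finset.sum_nbij' (fun x => ⟨x.2, x.1⟩) (fun x => ⟨x.2, x.1⟩) ?_ ?_
      (fun _ _ => rfl) (fun _ _ => rfl) (fun _ _ => rfl) <;>
    simp only [Sigma.forall, Finset.mem_sigma, Finset.mem_univ, true_and,
      Finset.mem_Iio, Finset.mem_Ioi] <;> exact fun _ _ h => h
  calc ∑ i, ∑ k ∈ Finset.univ.erase i, a i k
      = ∑ i, (∑ k ∈ Finset.Iio i, a i k + ∑ k ∈ Finset.Ioi i, a i k) := by
        refine Finset.sum_congr rfl fun i _ => ?_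
        rw [herase i, Finset.sum_union (hdisj i)]
    _ = ∑ i, ∑ k ∈ Finset.Iio i, a i k + ∑ i, ∑ k ∈ Finset.Ioi i, a i k := by
        rw [Finset.sum_add_distrib]
    _ = ∑ i, ∑ k ∈ Finset.Ioi i, a k i + ∑ i, ∑ k ∈ Finset.Ioi i, a i k := by rw [hswap]
    _ = ∑ i, ∑ k ∈ Finset.Ioi i, (a i k + a k i) := by
        rw [← Finset.sum_add_distrib]
        refine Finset.sum_congr rfl fun i _ => ?_
        rw [← Finset.sum_add_distrib]
        exact Finset.sum_congr rfl fun k _ => add_comm _ _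

/-- Post-fault energy function for the swing equations:
`H(δ, ω) = ∑ ½ Mᵢ ωᵢ² − ∑ (P_{m,i} − P_{a,i}) δᵢ − ∑_{i<k} P̄ᵢₖ cos(δᵢ − δₖ)`. -/
noncomputable def postEnergy (n : ℕ) (M Pm Pa : Fin n → ℝ) (Pb : Fin n → Fin n → ℝ)
    (δ ω : Fin n → ℝ) : ℝ :=
  (∑ i, (1 / 2) * M i * ω i ^ 2) - (∑ i, (Pm i - Pa i) * δ i)
    - ∑ i, ∑ k ∈ Finset.Ioi i, Pb i k * Real.cos (δ i - δ k)

/-- The post-fault energy along a fault-on trajectory started at rest admits the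
second-order expansion `H(t) = H(δˢ, 0) + β̃ t² + o(t²)` as `t → 0`. -/
theorem postEnergy_second_order_expansion (n : ℕ) (hn : 1 ≤ n)
    (M Pm Pa Paon : Fin n → ℝ) (hM : ∀ i, 0 < M i)
    (Pb Pbon : Fin n → Fin n → ℝ)
    (hsym : ∀ i k, Pb i k = Pb k i) (hsymon : ∀ i k, Pbon i k = Pbon k i)
    (δs : Fin n → ℝ) (δ ω : ℝ → Fin n → ℝ)
    (hδ : ∀ i, Differentiable ℝ fun t => δ t i)
    (hω : ∀ i, Differentiable ℝ fun t => ω t i)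
    (heq1 : ∀ (t : ℝ) (i : Fin n), deriv (fun s => δ s i) t = ω t i)
    (heq2 : ∀ (t : ℝ) (i : Fin n), M i * deriv (fun s => ω s i) t
      = (Pm i - Paon i) - ∑ k ∈ Finset.univ.erase i, Pbon i k * Real.sin (δ t i - δ t k))
    (h0 : δ 0 = δs) (hw0 : ω 0 = 0)
    (u : Fin n → ℝ)
    (hu : ∀ i, u i = (1 / M i) * ((Pm i - Paon i)
      - ∑ k ∈ Finset.univ.erase i, Pbon i k * Real.sin (δs i - δs k)))
    (βt : ℝ)
    (hβ : βt = (1 / 2) * (∑ i, (Pa i - Paon i) * u i)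
      + (1 / 2) * ∑ i, ∑ k ∈ Finset.Ioi i,
          (Pb i k - Pbon i k) * Real.sin (δs i - δs k) * (u i - u k)) :
    (fun t => postEnergy n M Pm Pa Pb (δ t) (ω t) - postEnergy n M Pm Pa Pb δs 0 - βt * t ^ 2)
      =o[nhds (0 : ℝ)] fun t => t ^ 2 := by
  -- abbreviations
  have hMne : ∀ i, M i ≠ 0 := fun i => (hM i).ne'
  set Wf : ℝ → Fin n → ℝ := fun t i => (1 / M i) * ((Pm i - Paon i)
      - ∑ k ∈ Finset.univ.erase i, Pbon i k * Real.sin (δ t i - δ t k)) with hWfdef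
  have hWeq : ∀ t i, deriv (fun s => ω s i) t = Wf t i := by
    intro t i
    have h := heq2 t i
    simp only [hWfdef]
    rw [← h, one_div, inv_mul_cancel_left₀ (hMne i)]
  have hW0 : ∀ i, Wf 0 i = u i := by
    intro i; rw [hu i]; simp only [hWfdef, h0]
  have hδD : ∀ (t : ℝ) (i : Fin n), HasDerivAt (fun s => δ s i) (ω t i) t := by
    intro t i
    have := ((hδ i) t).hasDerivAt
    rwa [heq1 t i] at this
  have hωD : ∀ (t : ℝ) (i : Fin n), HasDerivAt (fun s => ω s i) (Wf t i) t := by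
    intro t i
    have := ((hω i) t).hasDerivAt
    rwa [hWeq t i] at this
  have hWfdiff : ∀ i, Differentiable ℝ (fun t => Wf t i) := by
    intro i
    apply Differentiable.const_mul
    apply Differentiable.const_sub
    exact Differentiable.fun_sum fun k _ =>
      (Real.differentiable_sin.comp ((hδ i).sub (hδ k))).const_mul _
  set F : ℝ → ℝ := fun t => postEnergy n M Pm Pa Pb (δ t) (ω t) with hFdef
  set G : ℝ → ℝ := fun t => (∑ i, M i * (ω t i * Wf t i)) - (∑ i, (Pm i - Pa i) * ω t i)
      + ∑ i, ∑ k ∈ Finset.Ioi i, Pb i k * (Real.sin (δ t i - δ t k) * (ω t i - ω t k))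
    with hGdef
  have hFG : ∀ t, HasDerivAt F (G t) t := by
    intro t
    have hA : HasDerivAt (fun s => ∑ i, (1 / 2) * M i * (ω s i) ^ 2)
        (∑ i, M i * (ω t i * Wf t i)) t := by
      apply HasDerivAt.fun_sum
      intro i _
      have := ((hωD t i).fun_pow 2).const_mul ((1 / 2) * M i)
      exact this.congr_deriv (by push_cast; ring)
    have hB : HasDerivAt (fun s => ∑ i, (Pm i - Pa i) * δ s i)
        (∑ i, (Pm i - Pa i) * ω t i) t :=
      HasDerivAt.fun_sum fun i _ => (hδD t i).const_mul _
    have hC : HasDerivAt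
        (fun s => ∑ i, ∑ k ∈ Finset.Ioi i, Pb i k * Real.cos (δ s i - δ s k))
        (∑ i, ∑ k ∈ Finset.Ioi i,
          Pb i k * (-Real.sin (δ t i - δ t k) * (ω t i - ω t k))) t := by
      apply HasDerivAt.fun_sum
      intro i _
      apply HasDerivAt.fun_sum
      intro k _
      exact (((hδD t i).sub (hδD t k)).cos).const_mul _
    have h := (hA.fun_sub hB).fun_sub hC
    have hFe : F = fun s => (∑ i, (1 / 2) * M i * (ω s i) ^ 2)
        - (∑ i, (Pm i - Pa i) * δ s i)
        - ∑ i, ∑ k ∈ Finset.Ioi i, Pb i k * Real.cos (δ s i - δ s k) := by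
      funext s; simp only [hFdef, postEnergy]
    have hsum : ∑ i, ∑ k ∈ Finset.Ioi i,
          Pb i k * (-Real.sin (δ t i - δ t k) * (ω t i - ω t k))
        = -∑ i, ∑ k ∈ Finset.Ioi i,
          Pb i k * (Real.sin (δ t i - δ t k) * (ω t i - ω t k)) := by
      rw [← Finset.sum_neg_distrib]
      refine Finset.sum_congr rfl fun i _ => ?_
      rw [← Finset.sum_neg_distrib]
      exact Finset.sum_congr rfl fun k _ => by ring
    rw [hsum] at h
    rw [hFe, hGdef]
    exact h.congr_deriv (by ring)
  have hFdiff : Differentiable ℝ F := fun t => (hFG t).differentiableAt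
  have hderivF : deriv F = G := funext fun t => (hFG t).deriv
  have hG0 : G 0 = 0 := by
    simp [hGdef, hw0]
  -- second derivative of F at 0
  set c0 : ℝ := (∑ i, M i * (u i * u i)) - (∑ i, (Pm i - Pa i) * u i)
      + ∑ i, ∑ k ∈ Finset.Ioi i, Pb i k * (Real.sin (δs i - δs k) * (u i - u k)) with hc0def
  have hG' : HasDerivAt G c0 0 := by
    have h1 : HasDerivAt (fun t => ∑ i, M i * (ω t i * Wf t i))
        (∑ i, M i * (u i * u i)) 0 := by
      apply HasDerivAt.fun_sum
      intro i _
      have hWfD : HasDerivAt (fun t => Wf t i) (deriv (fun t => Wf t i) 0) 0 :=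
        ((hWfdiff i) 0).hasDerivAt
      have := ((hωD 0 i).fun_mul hWfD).const_mul (M i)
      refine this.congr_deriv ?_
      rw [hW0 i]
      simp [hw0]
    have h2 : HasDerivAt (fun t => ∑ i, (Pm i - Pa i) * ω t i)
        (∑ i, (Pm i - Pa i) * u i) 0 := by
      apply HasDerivAt.fun_sum
      intro i _
      have := (hωD 0 i).const_mul (Pm i - Pa i)
      rwa [hW0 i] at this
    have h3 : HasDerivAt (fun t => ∑ i, ∑ k ∈ Finset.Ioi i,
          Pb i k * (Real.sin (δ t i - δ t k) * (ω t i - ω t k)))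
        (∑ i, ∑ k ∈ Finset.Ioi i,
          Pb i k * (Real.sin (δs i - δs k) * (u i - u k))) 0 := by
      apply HasDerivAt.fun_sum
      intro i _
      apply HasDerivAt.fun_sum
      intro k _
      have hs : HasDerivAt (fun t => Real.sin (δ t i - δ t k))
          (Real.cos (δ 0 i - δ 0 k) * (ω 0 i - ω 0 k)) 0 :=
        ((hδD 0 i).sub (hδD 0 k)).sin
      have hd : HasDerivAt (fun t => ω t i - ω t k) (Wf 0 i - Wf 0 k) 0 :=
        (hωD 0 i).sub (hωD 0 k)
      have := (hs.fun_mul hd).const_mul (Pb i k)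
      refine this.congr_deriv ?_
      rw [hW0 i, hW0 k, h0]
      simp [hw0]
    have := (h1.fun_sub h2).fun_add h3
    convert this using 1
  -- algebra: c0 = 2 * βt
  have hMu : ∀ i, M i * u i = (Pm i - Paon i)
      - ∑ k ∈ Finset.univ.erase i, Pbon i k * Real.sin (δs i - δs k) := by
    intro i; rw [hu i, ← mul_assoc, mul_one_div, div_self (hMne i), one_mul]
  have hkey : c0 = 2 * βt := by
    have h1 : ∀ i, M i * (u i * u i) - (Pm i - Pa i) * u i
        = (Pa i - Paon i) * u i
          - ∑ k ∈ Finset.univ.erase i, u i * (Pbon i k * Real.sin (δs i - δs k)) := by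
      intro i
      have : M i * (u i * u i) = (M i * u i) * u i := by ring
      rw [this, hMu i, sub_mul, Finset.sum_mul]
      rw [show ∑ k ∈ Finset.univ.erase i,
            Pbon i k * Real.sin (δs i - δs k) * u i
          = ∑ k ∈ Finset.univ.erase i,
            u i * (Pbon i k * Real.sin (δs i - δs k)) from
        Finset.sum_congr rfl fun k _ => by ring]
      ring
    have h2 : ∑ i, ∑ k ∈ Finset.univ.erase i,
          u i * (Pbon i k * Real.sin (δs i - δs k))
        = ∑ i, ∑ k ∈ Finset.Ioi i,
          Pbon i k * Real.sin (δs i - δs k) * (u i - u k) := by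
      rw [sum_erase_eq_sum_Ioi]
      refine Finset.sum_congr rfl fun i _ => Finset.sum_congr rfl fun k _ => ?_
      rw [hsymon k i, show δs k - δs i = -(δs i - δs k) by ring, Real.sin_neg]
      ring
    have h3 : (∑ i, M i * (u i * u i)) - (∑ i, (Pm i - Pa i) * u i)
        = ∑ i, ((Pa i - Paon i) * u i)
          - ∑ i, ∑ k ∈ Finset.Ioi i, Pbon i k * Real.sin (δs i - δs k) * (u i - u k) := by
      rw [← Finset.sum_sub_distrib, ← h2, ← Finset.sum_sub_distrib]
      exact Finset.sum_congr rfl fun i _ => h1 i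
    have h4 : ∑ i, ∑ k ∈ Finset.Ioi i, Pb i k * (Real.sin (δs i - δs k) * (u i - u k))
          - ∑ i, ∑ k ∈ Finset.Ioi i, Pbon i k * Real.sin (δs i - δs k) * (u i - u k)
        = ∑ i, ∑ k ∈ Finset.Ioi i,
          (Pb i k - Pbon i k) * Real.sin (δs i - δs k) * (u i - u k) := by
      rw [← Finset.sum_sub_distrib]
      refine Finset.sum_congr rfl fun i _ => ?_
      rw [← Finset.sum_sub_distrib]
      exact Finset.sum_congr rfl fun k _ => by ring
    rw [hc0def, h3, hβ]
    linarith [h4]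
  -- conclude by Taylor expansion
  have hd0 : deriv F 0 = 0 := by rw [hderivF]; exact hG0
  have hsecond : HasDerivAt (deriv F) (2 * βt) 0 := by
    rw [hderivF]; rw [← hkey]; exact hG'
  have htay := taylor2 F (2 * βt) hFdiff hd0 hsecond
  have hF0 : F 0 = postEnergy n M Pm Pa Pb δs 0 := by
    simp only [hFdef, h0, hw0]
  have heqfun : (fun t => postEnergy n M Pm Pa Pb (δ t) (ω t)
        - postEnergy n M Pm Pa Pb δs 0 - βt * t ^ 2)
      = fun t => F t - F 0 - (2 * βt / 2) * t ^ 2 := by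
    funext t
    rw [hF0]
    simp only [hFdef]
    ring_nf
  rw [heqfun]
  exact htay
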